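/- Let A and D be symmetric positive definite n×n matrices and suppose every eigenvalue λ of D⁻¹A satisfies 0 < λ < 2. Then for every k ≥ 1, the preconditioner M_k⁻¹ = ∑_{j=0}^{k-1}(I - D⁻¹A)^j D⁻¹ is symmetric positive definite whenever k is odd. -/

import Mathlib

open Matrix

private lemma conj_posDef {n : ℕ} {P B : Matrix (Fin n) (Fin n) ℝ} (hP : P.PosDef)
    (hB : IsUnit B) : (Bᴴ * P * B).PosDef := by
  refine Matrix.PosDef.of_dotProduct_mulVec_pos (Matrix.isHermitian_conjTranspose_mul_mul _ hP.1) fun x hx => ?_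
  have hx' : B *ᵥ x ≠ 0 := by
    intro h
    exact hx ((Matrix.mulVec_injective_iff_isUnit.mpr hB)
      (by rw [h, Matrix.mulVec_zero]))
  have key := hP.dotProduct_mulVec_pos hx'
  rwa [star_mulVec, Matrix.mulVec_mulVec, ← Matrix.dotProduct_mulVec,
    Matrix.mulVec_mulVec, ← mul_assoc] at key

private lemma sum_diagonal_pows {n k : ℕ} (f : Fin n → ℝ) :
    (∑ j ∈ Finset.range k, Matrix.diagonal f ^ j) =
      Matrix.diagonal (fun i => ∑ j ∈ Finset.range k, f i ^ j) := by
  ext i i'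
  simp only [Matrix.sum_apply, Matrix.diagonal_pow, Matrix.diagonal_apply]
  by_cases h : i = i' <;> simp [h]

private lemma geom_posDef {n k : ℕ} (hk : k ≠ 0) {S : Matrix (Fin n) (Fin n) ℝ}
    (hS : S.IsHermitian) (h2 : ∀ i, hS.eigenvalues i < 2) :
    (∑ j ∈ Finset.range k, (1 - S) ^ j).PosDef := by
  classical
  set U : Matrix (Fin n) (Fin n) ℝ := (hS.eigenvectorUnitary : Matrix (Fin n) (Fin n) ℝ) with hU
  have hUstar : U * star U = 1 := (Matrix.mem_unitaryGroup_iff).mp (hS.eigenvectorUnitary).2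
  have hstarU : star U * U = 1 := (Matrix.mem_unitaryGroup_iff').mp (hS.eigenvectorUnitary).2
  set d := hS.eigenvalues with hd
  have hspec : S = U * Matrix.diagonal d * star U := by
    have := hS.spectral_theorem
    simpa [RCLike.ofReal_real_eq_id] using this
  have h1S : 1 - S = U * Matrix.diagonal (fun i => 1 - d i) * star U := by
    have hdiag : Matrix.diagonal (fun i => (1 : ℝ) - d i)
        = 1 - Matrix.diagonal d := by
      rw [← Matrix.diagonal_one, Matrix.diagonal_sub]
    rw [hdiag, mul_sub, sub_mul, mul_one, hUstar, hspec]
  set u : (Matrix (Fin n) (Fin n) ℝ)ˣ := ⟨U, star U, hUstar, hstarU⟩ with hu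
  have hpow : ∀ j : ℕ, (1 - S) ^ j = U * (Matrix.diagonal fun i => 1 - d i) ^ j * star U := by
    intro j
    rw [h1S]
    exact Units.conj_pow u (Matrix.diagonal fun i => 1 - d i) j
  have hsum : (∑ j ∈ Finset.range k, (1 - S) ^ j)
      = U * Matrix.diagonal (fun i => ∑ j ∈ Finset.range k, (1 - d i) ^ j) * star U := by
    simp_rw [hpow]
    rw [← Finset.sum_mul, ← Finset.mul_sum, sum_diagonal_pows]

  have hdiagPD : (Matrix.diagonal (fun i => ∑ j ∈ Finset.range k, (1 - d i) ^ j)).PosDef := by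
    rw [Matrix.posDef_diagonal_iff]
    intro i
    exact geom_sum_pos' (by have := h2 i; linarith) hk
  have hUnit : IsUnit (star U) := (u⁻¹).isUnit
  have := conj_posDef hdiagPD hUnit
  rw [← Matrix.star_eq_conjTranspose, star_star] at this
  rwa [hsum]

/-- If `A` and `D` are SPD and every eigenvalue `λ` of `D⁻¹A` satisfies `0 < λ < 2`, then for
every odd `k ≥ 1` the preconditioner `M_k⁻¹ = ∑_{j<k}(I - D⁻¹A)^j D⁻¹` is SPD. -/
theorem neumann_preconditioner_posDef {n : ℕ} (A D : Matrix (Fin n) (Fin n) ℝ)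
    (hA : A.PosDef) (hD : D.PosDef)
    (hspec : ∀ μ ∈ spectrum ℝ (D⁻¹ * A), 0 < μ ∧ μ < 2)
    (k : ℕ) (hk1 : 1 ≤ k) (hk : Odd k) :
    (∑ j ∈ Finset.range k, (1 - D⁻¹ * A) ^ j * D⁻¹).PosDef := by
  classical
  have hDsd := hD.posSemidef
  obtain ⟨R, hRps, hRR⟩ : ∃ R : Matrix (Fin n) (Fin n) ℝ, R.PosSemidef ∧ R * R = D := by
    open scoped MatrixOrder in
    exact ⟨CFC.sqrt D, (CFC.sqrt_nonneg D).posSemidef, CFC.sqrt_mul_sqrt_self D hDsd.nonneg⟩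
  have hdetD : D.det ≠ 0 := hD.det_pos.ne'
  have hdetR : R.det ≠ 0 := by
    intro h; apply hdetD; rw [← hRR, Matrix.det_mul, h, mul_zero]
  have hRunit : IsUnit R := (Matrix.isUnit_iff_isUnit_det R).mpr hdetR.isUnit
  have hRiR : R⁻¹ * R = 1 := Matrix.nonsing_inv_mul R hdetR.isUnit
  have hRRi : R * R⁻¹ = 1 := Matrix.mul_nonsing_inv R hdetR.isUnit
  have hDinv : D⁻¹ = R⁻¹ * R⁻¹ := by rw [← hRR, Matrix.mul_inv_rev]
  have hRiH : (R⁻¹)ᴴ = R⁻¹ := hRps.1.inv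
  set S := R⁻¹ * A * R⁻¹ with hSdef
  have hSherm : S.IsHermitian := by
    have := Matrix.isHermitian_conjTranspose_mul_mul (R⁻¹) hA.1
    rwa [hRiH] at this
  have hDA : D⁻¹ * A = R⁻¹ * S * R := by
    rw [hDinv, hSdef]
    simp only [Matrix.mul_assoc]
    rw [hRiR, Matrix.mul_one]
  have hspecS : spectrum ℝ S = spectrum ℝ (D⁻¹ * A) := by
    rw [hDA]
    have h1 : R⁻¹ * S * R = (↑(hRunit.unit⁻¹) : Matrix (Fin n) (Fin n) ℝ) * S * (↑hRunit.unit : Matrix (Fin n) (Fin n) ℝ) := by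
      rw [Matrix.coe_units_inv, hRunit.unit_spec]
    rw [h1, spectrum.units_conjugate']
  have heig : ∀ i, hSherm.eigenvalues i < 2 := fun i =>
    (hspec _ (hspecS ▸ hSherm.eigenvalues_mem_spectrum_real i)).2
  have hterm : ∀ j : ℕ, (1 - D⁻¹ * A) ^ j * D⁻¹ = R⁻¹ * (1 - S) ^ j * R⁻¹ := by
    intro j
    have h1 : 1 - D⁻¹ * A = R⁻¹ * (1 - S) * R := by
      rw [mul_sub, sub_mul, mul_one, hRiR, hDA]
    have hp : (R⁻¹ * (1 - S) * R) ^ j = R⁻¹ * (1 - S) ^ j * R := by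
      have := Units.conj_pow' hRunit.unit (1 - S) j
      rwa [Matrix.coe_units_inv, hRunit.unit_spec] at this
    rw [h1, hp, hDinv, ← Matrix.mul_assoc,
      Matrix.mul_assoc (R⁻¹ * (1 - S) ^ j) R R⁻¹, hRRi, Matrix.mul_one]
  have hsum : (∑ j ∈ Finset.range k, (1 - D⁻¹ * A) ^ j * D⁻¹)
      = R⁻¹ * (∑ j ∈ Finset.range k, (1 - S) ^ j) * R⁻¹ := by
    simp_rw [hterm]
    rw [← Finset.sum_mul, ← Finset.mul_sum]
  have hP : (∑ j ∈ Finset.range k, (1 - S) ^ j).PosDef :=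
    geom_posDef (by omega) hSherm heig
  have hRiunit : IsUnit R⁻¹ := Matrix.isUnit_nonsing_inv_iff.mpr hRunit
  have final := conj_posDef hP hRiunit
  rw [hRiH] at final
  rwa [hsum]
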